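/- Let p ≥ 1 and let x : Fin (p+1) → ℝ be injective (p+1 distinct nodes). For k ∈ ℕ let m_k ∈ ℝ^{p+1} denote the vector with entries (x j)^k. Suppose A is a symmetric (p+1)×(p+1) real matrix satisfying A *ᵥ m_k = 0 for every k ≤ p−1. Then A has rank at most 1 and admits a rank-one representation: there exist a scalar λ ∈ ℝ and a vector v ∈ ℝ^{p+1} such that A = λ • (vvᵀ) (the outer product of v with itself) and v is Euclidean-orthogonal to every monomial sample vector of degree at most p−1, i.e. v ⬝ᵥ m_k = 0 for all k ≤ p−1. -/

import Mathlib

open Matrix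

/-- A symmetric `(p+1)×(p+1)` dissipation operator annihilating all monomial
sample vectors of degree at most `p-1` at `p+1` distinct nodes has rank at most
one, and admits a rank-one representation `A = λ • v vᵀ` with `v` orthogonal to
all monomial sample vectors of degree at most `p-1`. -/
theorem se_dissipation_rank_one
    (p : ℕ) (hp : 1 ≤ p) (x : Fin (p + 1) → ℝ) (hx : Function.Injective x)
    (A : Matrix (Fin (p + 1)) (Fin (p + 1)) ℝ)
    (hAsymm : Aᵀ = A)
    (hA : ∀ k : ℕ, k ≤ p - 1 → A *ᵥ (fun j => (x j) ^ k) = 0) :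
    A.rank ≤ 1 ∧
    ∃ (lam : ℝ) (v : Fin (p + 1) → ℝ),
      A = lam • vecMulVec v v ∧
      ∀ k : ℕ, k ≤ p - 1 → v ⬝ᵥ (fun j => (x j) ^ k) = 0 := by
  have hdet : (Matrix.vandermonde x).det ≠ 0 := det_vandermonde_ne_zero_iff.mpr hx
  have hli : LinearIndependent ℝ (fun k => (Matrix.vandermonde x)ᵀ k) :=
    linearIndependent_cols_iff_isUnit.mpr ((Matrix.isUnit_iff_isUnit_det _).mpr hdet.isUnit)
  -- k ≤ p - 1 ↔ k < p
  have hkp : ∀ k : ℕ, k ≤ p - 1 ↔ k < p := fun k => Nat.le_sub_one_iff_lt hp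
  -- the subfamily of the first p columns
  have hli' : LinearIndependent ℝ (fun k : Fin p => (Matrix.vandermonde x)ᵀ (Fin.castSucc k)) :=
    hli.comp _ (Fin.castSucc_injective p)
  -- each lies in the kernel of mulVecLin
  have hker : ∀ k : Fin p, (Matrix.vandermonde x)ᵀ (Fin.castSucc k) ∈
      LinearMap.ker A.mulVecLin := by
    intro k
    apply LinearMap.mem_ker.mpr
    have : A *ᵥ (fun j => (x j) ^ (k : ℕ)) = 0 :=
      hA k ((hkp k).mpr k.isLt)
    rw [Matrix.mulVecLin_apply]
    rw [show (Matrix.vandermonde x)ᵀ (Fin.castSucc k) = fun j => (x j) ^ (k : ℕ) from by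
      ext j; simp [Matrix.vandermonde]]
    exact this
  have hspan : Submodule.span ℝ (Set.range (fun k : Fin p =>
      (Matrix.vandermonde x)ᵀ (Fin.castSucc k))) ≤ LinearMap.ker A.mulVecLin :=
    Submodule.span_le.mpr (by rintro _ ⟨k, rfl⟩; exact hker k)
  have hfr : (p : ℕ) ≤ Module.finrank ℝ (LinearMap.ker A.mulVecLin) := by
    have h1 := finrank_span_eq_card hli'
    have h2 := Submodule.finrank_mono hspan
    rw [h1] at h2
    simpa using h2
  have hrn := LinearMap.finrank_range_add_finrank_ker A.mulVecLin
  have hdim : Module.finrank ℝ (Fin (p + 1) → ℝ) = p + 1 := by simp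
  have hrank : A.rank ≤ 1 := by
    have : A.rank = Module.finrank ℝ (LinearMap.range A.mulVecLin) := rfl
    omega
  refine ⟨hrank, ?_⟩
  by_cases hA0 : A = 0
  · refine ⟨0, 0, by simp [hA0], fun k hk => by simp⟩
  · -- nonzero entry
    obtain ⟨i₀, hi₀⟩ : ∃ i, (fun i j => A i j) i ≠ 0 := by
      by_contra h
      push_neg at h
      exact hA0 (by ext i j; have := congrFun (h i) j; simpa using this)
    obtain ⟨j₀, hj₀⟩ : ∃ j, A i₀ j ≠ 0 := by
      by_contra h
      push_neg at h
      exact hi₀ (funext h)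
    -- range is at most 1-dimensional
    have hr1 : Module.finrank ℝ (LinearMap.range A.mulVecLin) ≤ 1 := hrank
    obtain ⟨g, hg⟩ := finrank_le_one_iff.mp hr1
    -- every column is a multiple of g
    have hcol : ∀ j, ∃ c : ℝ, ∀ i, A i j = c * (g : Fin (p+1) → ℝ) i := by
      intro j
      have hmem : (fun i => A i j) ∈ LinearMap.range A.mulVecLin := by
        refine ⟨Pi.single j 1, ?_⟩
        simp [Matrix.mulVecLin_apply, Matrix.mulVec_single]
        rfl
      obtain ⟨c, hc⟩ := hg ⟨_, hmem⟩
      exact ⟨c, fun i => by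
        have := congrFun (congrArg (Subtype.val) hc) i
        simpa [mul_comm] using this.symm⟩
    choose c hc using hcol
    set G : Fin (p+1) → ℝ := (g : Fin (p+1) → ℝ) with hG
    have hsymm : ∀ i j, A i j = A j i := fun i j => by
      have h := congrFun (congrFun hAsymm j) i
      rw [Matrix.transpose_apply] at h
      exact h
    have hGi₀ : G i₀ ≠ 0 := fun h => hj₀ (by rw [hc j₀ i₀, h, mul_zero])
    have hcj₀ : c j₀ ≠ 0 := fun h => hj₀ (by rw [hc j₀ i₀, h, zero_mul])
    have hGj₀ : G j₀ ≠ 0 := by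
      intro h
      apply hj₀
      have h1 : A i₀ j₀ = A j₀ i₀ := hsymm i₀ j₀
      rw [h1, hc i₀ j₀]
      rw [h, mul_zero]
    -- c i = (c j₀ / G j₀) * G i
    have hci : ∀ i, c i = (c j₀ / G j₀) * G i := by
      intro i
      have h1 : c j₀ * G i = c i * G j₀ := by
        have := (hc j₀ i).symm.trans ((hsymm i j₀).trans (hc i j₀))
        linarith [this]
      field_simp
      linarith [h1]
    refine ⟨c j₀ / G j₀, G, ?_, ?_⟩
    · ext i j
      rw [hc j i, hci j]
      simp [vecMulVec_apply]
      ring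
    · intro k hk
      have h0 := congrFun (hA k hk) i₀
      have : (∑ j, A i₀ j * (x j) ^ k) = 0 := by
        simpa [Matrix.mulVec, dotProduct] using h0
      have hexp : (∑ j, A i₀ j * (x j) ^ k)
          = (c j₀ / G j₀) * G i₀ * ∑ j, G j * (x j) ^ k := by
        rw [Finset.mul_sum]
        refine Finset.sum_congr rfl fun j _ => ?_
        rw [hc j i₀, hci j]; ring
      rw [hexp] at this
      have hlam : c j₀ / G j₀ ≠ 0 := div_ne_zero hcj₀ hGj₀
      have := mul_eq_zero.mp this
      rcases this with h | h
      · exact absurd (mul_eq_zero.mp h) (by push_neg; exact ⟨hlam, hGi₀⟩)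
      · simpa [dotProduct] using h
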